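/- Let v be a balanced vertex of a geodesic net with incident edges a, b, c occurring consecutively in counterclockwise order. If the turn angle of the path entering along a and leaving along c (the second right turn) is positive, then: the turn angle from a to c lies in (0°, 60°]; the turn angle from a to b lies in (−120°, −60°]; and the turn angle from −b to c lies in (−120°, −60°]. -/

import Mathlib

open scoped Classical

/-- A geodesic net in the Euclidean plane: a finite connected graph embedded in `ℝ²`
whose edges are straight segments between distinct vertices, such that no vertex lies
in the interior of an edge and the interiors of distinct edges are disjoint. -/
structure GeodesicNet where
  verts : Finset (EuclideanSpace ℝ (Fin 2))
  Adj : EuclideanSpace ℝ (Fin 2) → EuclideanSpace ℝ (Fin 2) → Prop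
  symm : ∀ u v, Adj u v → Adj v u
  loopless : ∀ v, ¬Adj v v
  mem_of_adj : ∀ u v, Adj u v → u ∈ verts ∧ v ∈ verts
  nonempty : verts.Nonempty
  connected : ∀ u ∈ verts, ∀ v ∈ verts, Relation.ReflTransGen Adj u v
  no_vertex_inside : ∀ u v, Adj u v → ∀ w ∈ verts, w ∉ openSegment ℝ u v
  edges_disjoint : ∀ u v x y, Adj u v → Adj x y →
    ({u, v} : Set (EuclideanSpace ℝ (Fin 2))) ≠ {x, y} →
    openSegment ℝ u v ∩ openSegment ℝ x y = ∅

namespace GeodesicNet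

variable (G : GeodesicNet)

/-- The neighbours of a vertex, as a finset. -/
noncomputable def nbhd (v : EuclideanSpace ℝ (Fin 2)) : Finset (EuclideanSpace ℝ (Fin 2)) :=
  G.verts.filter fun u => G.Adj v u

/-- The unit vector at `v` pointing towards `u`. -/
noncomputable def dir (_G : GeodesicNet) (v u : EuclideanSpace ℝ (Fin 2)) : EuclideanSpace ℝ (Fin 2) :=
  ‖u - v‖⁻¹ • (u - v)

/-- A vertex is balanced if it has degree at least `3` and the unit vectors along the
incident edges (directed away from the vertex) sum to zero. -/
noncomputable def Balanced (v : EuclideanSpace ℝ (Fin 2)) : Prop :=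
  v ∈ G.verts ∧ 3 ≤ (G.nbhd v).card ∧ ∑ u ∈ G.nbhd v, G.dir v u = 0

/-- A vertex is unbalanced if it is a vertex of the net and is not balanced. -/
noncomputable def Unbalanced (v : EuclideanSpace ℝ (Fin 2)) : Prop :=
  v ∈ G.verts ∧ ¬G.Balanced v

end GeodesicNet

instance : Fact (Module.finrank ℝ (EuclideanSpace ℝ (Fin 2)) = 2) :=
  ⟨finrank_euclideanSpace_fin⟩

/-- The standard (counterclockwise) orientation of the Euclidean plane. -/
noncomputable def stdOrient : Orientation ℝ (EuclideanSpace ℝ (Fin 2)) (Fin 2) :=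
  (EuclideanSpace.basisFun (Fin 2) ℝ).toBasis.orientation

/-- The turn angle, in `(-π, π]`, at the vertex `v` of a piecewise geodesic path coming
from `p` and continuing to `q`: the signed angle from the forward extension of the
incoming segment to the outgoing segment (left turns positive); a backtrack counts
as `+π`. -/
noncomputable def turnAngle (p v q : EuclideanSpace ℝ (Fin 2)) : ℝ :=
  (stdOrient.oangle (v - p) (q - v)).toReal

/-- The counterclockwise angle, in `(0, 2π]`, from direction `e` to direction `f`. -/
noncomputable def ccwAngle (e f : EuclideanSpace ℝ (Fin 2)) : ℝ :=
  if (stdOrient.oangle e f).toReal ≤ 0 then (stdOrient.oangle e f).toReal + 2 * Real.pi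
  else (stdOrient.oangle e f).toReal


section SecondTurnAux

open Real

/-- Minimum element of a nonempty list of reals. -/
lemma list_exists_min (l : List ℝ) (h : l ≠ []) : ∃ a ∈ l, ∀ b ∈ l, a ≤ b := by
  induction l with
  | nil => simp at h
  | cons x t ih =>
    rcases eq_or_ne t [] with rfl | ht
    · exact ⟨x, by simp⟩
    · obtain ⟨a, ha, hmin⟩ := ih ht
      rcases le_total x a with hxa | hax
      · exact ⟨x, by simp, by
          intro b hb
          rcases List.mem_cons.1 hb with rfl | hb
          · exact le_refl _
          · exact le_trans hxa (hmin b hb)⟩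
      · exact ⟨a, List.mem_cons_of_mem _ ha, by
          intro b hb
          rcases List.mem_cons.1 hb with rfl | hb
          · exact hax
          · exact hmin b hb⟩

lemma list_exists_max (l : List ℝ) (h : l ≠ []) : ∃ a ∈ l, ∀ b ∈ l, b ≤ a := by
  obtain ⟨a, ha, hmin⟩ := list_exists_min (l.map Neg.neg) (by simpa using h)
  obtain ⟨b, hb, rfl⟩ := List.mem_map.1 ha
  exact ⟨b, hb, fun c hc => by
    have := hmin (-c) (List.mem_map_of_mem hc)
    linarith⟩

lemma cos_pair_nonneg {a b t : ℝ} (hab : b - a < π) (h1 : a ≤ t) (h2 : t ≤ b) :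
    0 ≤ Real.cos (t - a) + Real.cos (t - b) := by
  have key : Real.cos (t - a) + Real.cos (t - b)
      = 2 * Real.cos (t - (a + b) / 2) * Real.cos ((b - a) / 2) := by
    rw [Real.cos_add_cos]
    ring_nf
  rw [key]
  have h3 : 0 ≤ Real.cos ((b - a) / 2) :=
    Real.cos_nonneg_of_mem_Icc ⟨by nlinarith [Real.pi_pos], by linarith⟩
  have h4 : 0 ≤ Real.cos (t - (a + b) / 2) :=
    Real.cos_nonneg_of_mem_Icc ⟨by nlinarith [Real.pi_pos], by linarith⟩
  positivity

lemma list_sum_lin (l : List ℝ) (K L : ℝ) :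
    (l.map Real.cos).sum * K + (l.map Real.sin).sum * L
      = (l.map (fun t => Real.cos t * K + Real.sin t * L)).sum := by
  induction l with
  | nil => simp
  | cons x t ih =>
    simp only [List.map_cons, List.sum_cons]
    rw [← ih]; ring

/-- Odd lemma: an odd number of unit vectors with directions in an
interval of width < π has resultant of norm at least 1. -/
lemma odd_lemma : ∀ (n : ℕ) (l : List ℝ) (lo hi : ℝ), l.length = n → Odd n →
    (∀ t ∈ l, lo ≤ t ∧ t ≤ hi) → hi - lo < π →
    1 ≤ ((l.map Real.cos).sum) ^ 2 + ((l.map Real.sin).sum) ^ 2 := by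
  intro n
  induction n using Nat.strong_induction_on with
  | _ n ih =>
    intro l lo hi hlen hodd hmem hw
    rcases Nat.lt_or_ge n 2 with hn | hn
    · -- n = 1
      interval_cases n
      · exact absurd hodd (by simp)
      · obtain ⟨t, rfl⟩ := List.length_eq_one_iff.1 hlen
        simp [Real.sin_sq_add_cos_sq, Real.cos_sq_add_sin_sq]
    · -- n ≥ 2, odd so n ≥ 3
      have hne : l ≠ [] := by
        intro h; rw [h] at hlen; simp at hlen; omega
      obtain ⟨a, ha, hamin⟩ := list_exists_min l hne
      set l₁ := l.erase a with hl₁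
      have hlen₁ : l₁.length = n - 1 := by
        rw [hl₁, List.length_erase_of_mem ha, hlen]
      have hne₁ : l₁ ≠ [] := by
        intro h; rw [h] at hlen₁; simp at hlen₁; omega
      obtain ⟨b, hb, hbmax⟩ := list_exists_max l₁ hne₁
      set l₂ := l₁.erase b with hl₂
      have hlen₂ : l₂.length = n - 2 := by
        rw [hl₂, List.length_erase_of_mem hb, hlen₁]
        omega
      -- perm facts for sums
      have perm1 : l.Perm (a :: l₁) := List.perm_cons_erase ha
      have perm2 : l₁.Perm (b :: l₂) := List.perm_cons_erase hb
      have hsumc : (l.map Real.cos).sum = Real.cos a + Real.cos b + (l₂.map Real.cos).sum := by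
        rw [(perm1.map Real.cos).sum_eq, List.map_cons, List.sum_cons,
          (perm2.map Real.cos).sum_eq, List.map_cons, List.sum_cons]
        ring
      have hsums : (l.map Real.sin).sum = Real.sin a + Real.sin b + (l₂.map Real.sin).sum := by
        rw [(perm1.map Real.sin).sum_eq, List.map_cons, List.sum_cons,
          (perm2.map Real.sin).sum_eq, List.map_cons, List.sum_cons]
        ring
      have hbl : b ∈ l := List.mem_of_mem_erase hb
      have hmem₂ : ∀ t ∈ l₂, a ≤ t ∧ t ≤ b := by
        intro t ht
        have ht₁ : t ∈ l₁ := List.mem_of_mem_erase ht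
        exact ⟨hamin t (List.mem_of_mem_erase ht₁), hbmax t ht₁⟩
      have hab : b - a < π := by
        have := hmem a ha; have := hmem b hbl; linarith [this.1, this.2,
          (hmem a ha).1, (hmem a ha).2]
      have hIH : 1 ≤ ((l₂.map Real.cos).sum) ^ 2 + ((l₂.map Real.sin).sum) ^ 2 := by
        refine ih (n - 2) (by omega) l₂ a b hlen₂ ?_ hmem₂ hab
        obtain ⟨k, hk⟩ := hodd
        exact ⟨k - 1, by omega⟩
      set C := (l₂.map Real.cos).sum
      set S := (l₂.map Real.sin).sum
      set K := Real.cos a + Real.cos b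
      set L := Real.sin a + Real.sin b
      have hcross : 0 ≤ C * K + S * L := by
        have : C * K + S * L = (l₂.map (fun t => Real.cos t * K + Real.sin t * L)).sum := by
          rw [← list_sum_lin]
        rw [this]
        apply List.sum_nonneg
        intro x hx
        obtain ⟨t, ht, rfl⟩ := List.mem_map.1 hx
        obtain ⟨h1, h2⟩ := hmem₂ t ht
        have expand : Real.cos t * K + Real.sin t * L
            = Real.cos (t - a) + Real.cos (t - b) := by
          rw [Real.cos_sub, Real.cos_sub]; simp only [K, L]; ring
        rw [expand]
        exact cos_pair_nonneg hab h1 h2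
      calc (1:ℝ) ≤ C ^ 2 + S ^ 2 := hIH
        _ ≤ (C + K) ^ 2 + (S + L) ^ 2 := by nlinarith [sq_nonneg K, sq_nonneg L]
        _ = ((l.map Real.cos).sum) ^ 2 + ((l.map Real.sin).sum) ^ 2 := by
            rw [hsumc, hsums]; ring

lemma key_ineq {M m : ℝ} (hM0 : 0 < M) (hM : M < π / 3) (hm0 : m < 0) (hmlo : -π ≤ m)
    (hspread : M - m < π) :
    (1 - Real.cos M - Real.cos m) ^ 2 + (Real.sin M + Real.sin m) ^ 2 < 1 := by
  have e : (1 - Real.cos M - Real.cos m) ^ 2 + (Real.sin M + Real.sin m) ^ 2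
      = 3 - 2 * Real.cos M - 2 * Real.cos m + 2 * Real.cos (M - m) := by
    rw [Real.cos_sub]
    nlinarith [Real.sin_sq_add_cos_sq M, Real.sin_sq_add_cos_sq m]
  rw [e]
  have hsa : 0 < Real.sin (M / 2) := by
    apply Real.sin_pos_of_pos_of_lt_pi (by linarith)
    nlinarith [Real.pi_pos]
  have hsb : 0 < Real.sin (-m / 2) := by
    apply Real.sin_pos_of_pos_of_lt_pi (by linarith)
    nlinarith [Real.pi_pos]
  have hC : 0 < Real.cos (M / 2 + -m / 2) := by
    apply Real.cos_pos_of_mem_Ioo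
    constructor <;> nlinarith [Real.pi_pos]
  have h1 : Real.cos M = 1 - 2 * Real.sin (M / 2) ^ 2 := by
    have h := Real.cos_two_mul (M / 2)
    rw [show 2 * (M / 2) = M by ring] at h
    nlinarith [Real.sin_sq_add_cos_sq (M / 2)]
  have h2 : Real.cos m = 1 - 2 * Real.sin (-m / 2) ^ 2 := by
    have h := Real.cos_two_mul (-m / 2)
    rw [show 2 * (-m / 2) = -m by ring, Real.cos_neg] at h
    nlinarith [Real.sin_sq_add_cos_sq (-m / 2)]
  have h3 : Real.cos (M - m) = 1 - 2 * Real.sin (M / 2 + -m / 2) ^ 2 := by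
    have h := Real.cos_two_mul (M / 2 + -m / 2)
    rw [show 2 * (M / 2 + -m / 2) = M - m by ring] at h
    nlinarith [Real.sin_sq_add_cos_sq (M / 2 + -m / 2)]
  have h4 : Real.sin (M / 2 + -m / 2)
      = Real.sin (M/2) * Real.cos (-m/2) + Real.cos (M/2) * Real.sin (-m/2) :=
    Real.sin_add _ _
  have h5 : Real.cos (M / 2 + -m / 2)
      = Real.cos (M/2) * Real.cos (-m/2) - Real.sin (M/2) * Real.sin (-m/2) :=
    Real.cos_add _ _
  have pa := Real.sin_sq_add_cos_sq (M/2)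
  have pb := Real.sin_sq_add_cos_sq (-m/2)
  have key : Real.sin (M / 2 + -m / 2) ^ 2 - Real.sin (M/2) ^ 2 - Real.sin (-m/2) ^ 2
      = 2 * Real.sin (M/2) * Real.sin (-m/2) * Real.cos (M / 2 + -m / 2) := by
    rw [h5]
    nth_rewrite 1 [h4]
    linear_combination (Real.sin (M/2))^2 * pb + (Real.sin (-m/2))^2 * pa
  have hp : 0 < 2 * Real.sin (M/2) * Real.sin (-m/2) * Real.cos (M / 2 + -m / 2) := by
    have := mul_pos (mul_pos hsa hsb) hC
    nlinarith [this]
  linarith [h1, h2, h3, key, hp]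

lemma core_exists {ι : Type*} (s : Finset ι) (f : ι → ℝ) (lo hi : ℝ)
    (hcard : 2 ≤ s.card) (hmem : ∀ y ∈ s, lo ≤ f y ∧ f y ≤ hi) (hw : hi - lo < π)
    (hanchor : -π ≤ lo)
    (hc : ∑ y ∈ s, Real.cos (f y) = 1) (hs : ∑ y ∈ s, Real.sin (f y) = 0) :
    ∃ y ∈ s, π / 3 ≤ f y := by
  classical
  by_contra hcon
  push_neg at hcon
  have hsne : s.Nonempty := Finset.card_pos.1 (by omega)
  obtain ⟨yM, hyM, hMmax⟩ := s.exists_max_image f hsne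
  obtain ⟨ym, hym, hmmin⟩ := s.exists_min_image f hsne
  set M := f yM with hMdef
  set m := f ym with hmdef
  have hMub : M < π / 3 := hcon yM hyM
  have hmM : m ≤ M := hMmax ym hym
  have hmlo : -π ≤ m := le_trans hanchor (hmem ym hym).1
  have hspread : M - m < π := by
    have h1 := (hmem yM hyM).2
    have h2 := (hmem ym hym).1
    linarith
  have hrange : ∀ y ∈ s, m ≤ f y ∧ f y ≤ M :=
    fun y hy => ⟨hmmin y hy, hMmax y hy⟩
  have hcard1 : (s.card : ℝ) ≠ 1 := by
    have : (2:ℝ) ≤ (s.card : ℝ) := by exact_mod_cast hcard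
    linarith
  have hcardneg : (s.card : ℝ) ≠ -1 := by
    have : (2:ℝ) ≤ (s.card : ℝ) := by exact_mod_cast hcard
    linarith
  -- m < 0 < M
  have hM0 : 0 < M := by
    by_contra hM0
    push_neg at hM0
    have hzero : ∀ y ∈ s, Real.sin (f y) = 0 := by
      have hnn : ∀ y ∈ s, 0 ≤ -Real.sin (f y) := by
        intro y hy
        have h1 := (hrange y hy).1
        have h2 := (hrange y hy).2
        have : Real.sin (f y) ≤ 0 :=
          Real.sin_nonpos_of_nonpos_of_neg_pi_le (by linarith) (by linarith)
        linarith
      have hsum0 : ∑ y ∈ s, -Real.sin (f y) = 0 := by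
        rw [Finset.sum_neg_distrib, hs, neg_zero]
      intro y hy
      have := (Finset.sum_eq_zero_iff_of_nonneg hnn).1 hsum0 y hy
      linarith
    have hval : ∀ y ∈ s, f y = 0 ∨ f y = -π := by
      intro y hy
      have h1 := (hrange y hy).1
      have h2 := (hrange y hy).2
      have hz := hzero y hy
      rcases lt_trichotomy (f y) 0 with hlt | heq | hgt
      · right
        by_contra hne
        have hgtpi : -π < f y := lt_of_le_of_ne (by linarith) (Ne.symm hne)
        have : 0 < Real.sin (-(f y)) :=
          Real.sin_pos_of_pos_of_lt_pi (by linarith) (by linarith)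
        rw [Real.sin_neg] at this; linarith
      · left; exact heq
      · exfalso
        have : 0 < Real.sin (f y) := by
          apply Real.sin_pos_of_pos_of_lt_pi hgt
          nlinarith [Real.pi_pos]
        linarith
    by_cases hex : ∃ y ∈ s, f y = -π
    · obtain ⟨y0, hy0, hy0pi⟩ := hex
      have hall : ∀ y ∈ s, Real.cos (f y) = -1 := by
        intro y hy
        rcases hval y hy with h | h
        · exfalso
          have hA := (hrange y hy).1
          have hB := (hrange y0 hy0).2
          -- f y - f y0 = π but ≤ M - m < π
          have : f y - f y0 ≤ M - m := by
            have := (hrange y hy).2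
            have := (hrange y0 hy0).1
            linarith
          rw [h, hy0pi] at this
          linarith
        · rw [h, Real.cos_neg, Real.cos_pi]
      rw [Finset.sum_congr rfl hall, Finset.sum_const, nsmul_eq_mul, mul_neg_one] at hc
      exact hcardneg (by linarith)
    · push_neg at hex
      have hall : ∀ y ∈ s, Real.cos (f y) = 1 := by
        intro y hy
        rcases hval y hy with h | h
        · rw [h, Real.cos_zero]
        · exact absurd h (hex y hy)
      rw [Finset.sum_congr rfl hall, Finset.sum_const, nsmul_eq_mul, mul_one] at hc
      exact hcard1 hc
  have hm0 : m < 0 := by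
    by_contra hm0
    push_neg at hm0
    have hzero : ∀ y ∈ s, Real.sin (f y) = 0 := by
      have hnn : ∀ y ∈ s, 0 ≤ Real.sin (f y) := by
        intro y hy
        have h1 := (hrange y hy).1
        have h2 := (hrange y hy).2
        apply Real.sin_nonneg_of_nonneg_of_le_pi (by linarith)
        nlinarith [Real.pi_pos]
      exact fun y hy => (Finset.sum_eq_zero_iff_of_nonneg hnn).1 hs y hy
    have hall : ∀ y ∈ s, Real.cos (f y) = 1 := by
      intro y hy
      have h1 := (hrange y hy).1
      have h2 := (hrange y hy).2
      have : f y = 0 := by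
        by_contra hne
        have hpos : 0 < f y := lt_of_le_of_ne (by linarith) (Ne.symm hne)
        have : 0 < Real.sin (f y) := by
          apply Real.sin_pos_of_pos_of_lt_pi hpos
          nlinarith [Real.pi_pos]
        have := hzero y hy; linarith
      rw [this, Real.cos_zero]
    rw [Finset.sum_congr rfl hall, Finset.sum_const, nsmul_eq_mul, mul_one] at hc
    exact hcard1 hc
  -- helper to convert a finset sum into a list for the odd lemma
  have list_facts : ∀ (s' : Finset ι), (∀ y ∈ s', y ∈ s) →
      ∃ l : List ℝ, l.length = s'.card ∧ (∀ t ∈ l, m ≤ t ∧ t ≤ M) ∧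
        (l.map Real.cos).sum = ∑ y ∈ s', Real.cos (f y) ∧
        (l.map Real.sin).sum = ∑ y ∈ s', Real.sin (f y) := by
    intro s' hsub
    refine ⟨(Multiset.map f s'.val).toList, ?_, ?_, ?_, ?_⟩
    · rw [Multiset.length_toList, Multiset.card_map]; rfl
    · intro t ht
      rw [Multiset.mem_toList, Multiset.mem_map] at ht
      obtain ⟨y, hy, rfl⟩ := ht
      exact hrange y (hsub y hy)
    · calc ((Multiset.map f s'.val).toList.map Real.cos).sum
          = ((Multiset.map Real.cos ↑((Multiset.map f s'.val).toList)) : Multiset ℝ).sum := by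
            rw [Multiset.map_coe, Multiset.sum_coe]
        _ = (Multiset.map Real.cos (Multiset.map f s'.val)).sum := by
            rw [Multiset.coe_toList]
        _ = ∑ y ∈ s', Real.cos (f y) := by rw [Multiset.map_map]; rfl
    · calc ((Multiset.map f s'.val).toList.map Real.sin).sum
          = ((Multiset.map Real.sin ↑((Multiset.map f s'.val).toList)) : Multiset ℝ).sum := by
            rw [Multiset.map_coe, Multiset.sum_coe]
        _ = (Multiset.map Real.sin (Multiset.map f s'.val)).sum := by
            rw [Multiset.coe_toList]
        _ = ∑ y ∈ s', Real.sin (f y) := by rw [Multiset.map_map]; rfl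
  rcases Nat.even_or_odd s.card with heven | hodd
  · -- even: remove the max element
    set s' := s.erase yM with hs'
    have hsumc : ∑ y ∈ s', Real.cos (f y) = 1 - Real.cos M := by
      have h := Finset.sum_erase_add s (fun y => Real.cos (f y)) hyM
      linarith [h, hc]
    have hsums : ∑ y ∈ s', Real.sin (f y) = -Real.sin M := by
      have h := Finset.sum_erase_add s (fun y => Real.sin (f y)) hyM
      linarith [h, hs]
    obtain ⟨l, hlen, hmeml, hlc, hls⟩ := list_facts s' (fun y hy => Finset.mem_of_mem_erase hy)
    have hcard' : s'.card = s.card - 1 := Finset.card_erase_of_mem hyM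
    have hodd' : Odd s'.card := by
      obtain ⟨k, hk⟩ := heven
      rw [hcard']
      exact ⟨k - 1, by omega⟩
    have := odd_lemma s'.card l m M (by rw [hlen]) hodd' hmeml hspread
    rw [hlc, hls, hsumc, hsums] at this
    have hcM : Real.cos M ≤ 1 / 2 := by nlinarith [Real.sin_sq_add_cos_sq M]
    have : Real.cos (π / 3) < Real.cos M :=
      Real.cos_lt_cos_of_nonneg_of_le_pi (le_of_lt hM0) (by linarith [Real.pi_pos]) hMub
    rw [Real.cos_pi_div_three] at this
    linarith
  · -- odd: remove max and min
    have hymM : ym ≠ yM := by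
      intro h
      rw [h] at hmdef
      rw [hmdef] at hm0
      exact absurd hM0 (by linarith)
    have hym' : ym ∈ s.erase yM := Finset.mem_erase.2 ⟨hymM, hym⟩
    set s'' := (s.erase yM).erase ym with hs''
    have hsumc : ∑ y ∈ s'', Real.cos (f y) = 1 - Real.cos M - Real.cos m := by
      have h1 := Finset.sum_erase_add s (fun y => Real.cos (f y)) hyM
      have h2 := Finset.sum_erase_add (s.erase yM) (fun y => Real.cos (f y)) hym'
      linarith [h1, h2, hc]
    have hsums : ∑ y ∈ s'', Real.sin (f y) = -Real.sin M - Real.sin m := by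
      have h1 := Finset.sum_erase_add s (fun y => Real.sin (f y)) hyM
      have h2 := Finset.sum_erase_add (s.erase yM) (fun y => Real.sin (f y)) hym'
      linarith [h1, h2, hs]
    obtain ⟨l, hlen, hmeml, hlc, hls⟩ := list_facts s''
      (fun y hy => Finset.mem_of_mem_erase (Finset.mem_of_mem_erase hy))
    have hcard'' : s''.card = s.card - 2 := by
      rw [hs'', Finset.card_erase_of_mem hym', Finset.card_erase_of_mem hyM]
      omega
    have hodd'' : Odd s''.card := by
      obtain ⟨k, hk⟩ := hodd
      rw [hcard'']
      exact ⟨k - 1, by omega⟩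
    have := odd_lemma s''.card l m M (by rw [hlen]) hodd'' hmeml hspread
    rw [hlc, hls, hsumc, hsums] at this
    have hki := key_ineq hM0 hMub hm0 hmlo hspread
    nlinarith [hki, this]

section Geometry


local notation "V2" => EuclideanSpace ℝ (Fin 2)
local notation "⟪" x ", " y "⟫" => @inner ℝ _ _ x y

lemma areaForm_eq_sin (x y : V2) :
    stdOrient.areaForm x y = ‖x‖ * ‖y‖ * Real.Angle.sin (stdOrient.oangle x y) := by
  by_cases hx : x = 0
  · simp [hx]
  by_cases hy : y = 0
  · simp [hy]
  have him : (stdOrient.kahler x y).im = stdOrient.areaForm x y := by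
    simp [Orientation.kahler_apply_apply, Complex.real_smul]
  rw [Orientation.oangle, Real.Angle.sin_coe, Complex.sin_arg, Orientation.norm_kahler, him]
  have hnx : ‖x‖ ≠ 0 := norm_ne_zero_iff.2 hx
  have hny : ‖y‖ ≠ 0 := norm_ne_zero_iff.2 hy
  field_simp

lemma ccw_coe (e f : V2) : ((ccwAngle e f : ℝ) : Real.Angle) = stdOrient.oangle e f := by
  unfold ccwAngle
  split_ifs with h
  · rw [Real.Angle.coe_add, Real.Angle.coe_two_pi, add_zero, Real.Angle.coe_toReal]
  · exact Real.Angle.coe_toReal _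

lemma ccw_pos (e f : V2) : 0 < ccwAngle e f := by
  unfold ccwAngle
  split_ifs with h
  · linarith [Real.Angle.neg_pi_lt_toReal (stdOrient.oangle e f), Real.pi_pos]
  · linarith [not_le.1 h]

lemma ccw_le (e f : V2) : ccwAngle e f ≤ 2 * π := by
  unfold ccwAngle
  split_ifs with h
  · linarith
  · linarith [Real.Angle.toReal_le_pi (stdOrient.oangle e f), Real.pi_pos]

lemma ccw_cos (e f : V2) : Real.cos (ccwAngle e f) = Real.Angle.cos (stdOrient.oangle e f) := by
  rw [← ccw_coe e f, Real.Angle.cos_coe]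

lemma ccw_sin (e f : V2) : Real.sin (ccwAngle e f) = Real.Angle.sin (stdOrient.oangle e f) := by
  rw [← ccw_coe e f, Real.Angle.sin_coe]

lemma ccw_self {e : V2} (he : e ≠ 0) : ccwAngle e e = 2 * π := by
  unfold ccwAngle
  rw [stdOrient.oangle_self e]
  simp [Real.Angle.toReal_zero]

/-- `toReal (↑θ + ↑π) = θ - π` for `θ ∈ (0, 2π]`. -/
lemma toReal_add_pi {θ : ℝ} (h0 : 0 < θ) (h2 : θ ≤ 2 * π) :
    ((θ : Real.Angle) + (π : ℝ)).toReal = θ - π := by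
  have : ((θ : Real.Angle) + (π : ℝ)) = ((θ - π : ℝ) : Real.Angle) := by
    rw [← Real.Angle.coe_add]
    rw [Real.Angle.angle_eq_iff_two_pi_dvd_sub]
    exact ⟨1, by ring⟩
  rw [this, Real.Angle.toReal_coe_eq_self_iff.2 ⟨by linarith, by linarith⟩]

/-- Turn angle through `v` in terms of the ccw angle. -/
lemma turn_eval (p v q : V2) (hp : p - v ≠ 0) (hq : q - v ≠ 0) :
    turnAngle p v q = ccwAngle (p - v) (q - v) - π := by
  unfold turnAngle
  have h1 : stdOrient.oangle (v - p) (q - v) = stdOrient.oangle (p - v) (q - v) + (π : ℝ) := by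
    rw [← neg_sub p v, stdOrient.oangle_neg_left hp hq]
  rw [h1, ← ccw_coe]
  exact toReal_add_pi (ccw_pos _ _) (ccw_le _ _)

end Geometry

end SecondTurnAux

open Real in
/-- Second Turn Lemma: let `v` be a balanced vertex of a geodesic net with
incident edges `a = vp`, `b = vx`, `c = vq` occurring consecutively in counterclockwise
order (`b` immediately follows `a`, and `c` immediately follows `b`).  If the turn angle
of the path entering along `a` and leaving along `c` (the second right turn) is
positive, then: the turn angle from `a` to `c` lies in `(0°, 60°]`; the turn angle from
`a` to `b` lies in `(-120°, -60°]`; and the turn angle from `-b` to `c` (entering along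
`b` from `x` and leaving along `c`) lies in `(-120°, -60°]`. -/
theorem second_turn_lemma
    (G : GeodesicNet) (v p x q : EuclideanSpace ℝ (Fin 2))
    (hvp : G.Adj v p) (hvx : G.Adj v x) (hvq : G.Adj v q)
    (hpx : x ≠ p) (hxq : q ≠ x) (hpq : q ≠ p)
    (hbal : G.Balanced v)
    (hfirst : ∀ y, G.Adj v y → y ≠ p →
      ccwAngle (p - v) (x - v) ≤ ccwAngle (p - v) (y - v))
    (hsecond : ∀ y, G.Adj v y → y ≠ p → y ≠ x →
      ccwAngle (p - v) (q - v) ≤ ccwAngle (p - v) (y - v))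
    (hpos : 0 < turnAngle p v q) :
    turnAngle p v q ∈ Set.Ioc 0 (π / 3) ∧
    turnAngle p v x ∈ Set.Ioc (-(2 * π / 3)) (-(π / 3)) ∧
    turnAngle x v q ∈ Set.Ioc (-(2 * π / 3)) (-(π / 3)) := by
  classical
  obtain ⟨hv, hdeg, hsum⟩ := hbal
  -- basic membership and nonvanishing
  have hmemnbhd : ∀ y, G.Adj v y → y ∈ G.nbhd v := by
    intro y hy
    exact Finset.mem_filter.2 ⟨(G.mem_of_adj v y hy).2, hy⟩
  have hadj_of_mem : ∀ y ∈ G.nbhd v, G.Adj v y := fun y hy => (Finset.mem_filter.1 hy).2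
  have hne_of_adj : ∀ y, G.Adj v y → y - v ≠ 0 := by
    intro y hy h
    have : y = v := by
      have := sub_eq_zero.1 h
      exact this
    rw [this] at hy
    exact G.loopless v hy
  have hpv : p - v ≠ 0 := hne_of_adj p hvp
  have hxv : x - v ≠ 0 := hne_of_adj x hvx
  have hqv : q - v ≠ 0 := hne_of_adj q hvq
  set θ : EuclideanSpace ℝ (Fin 2) → ℝ := fun y => ccwAngle (p - v) (y - v) with hθ
  set β := θ x with hβ
  set γ := θ q with hγ
  clear_value θ β γ
  -- the direction vectors and their coordinates
  have hdir_cos : ∀ y, G.Adj v y →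
      (inner ℝ (G.dir v p) (G.dir v y) : ℝ) = Real.cos (θ y) := by
    intro y hy
    have hyv := hne_of_adj y hy
    have hnp : ‖p - v‖ ≠ 0 := norm_ne_zero_iff.2 hpv
    have hny : ‖y - v‖ ≠ 0 := norm_ne_zero_iff.2 hyv
    unfold GeodesicNet.dir
    rw [real_inner_smul_left, real_inner_smul_right,
      stdOrient.inner_eq_norm_mul_norm_mul_cos_oangle]
    simp only [hθ]
    rw [ccw_cos]
    field_simp
  have hdir_sin : ∀ y, G.Adj v y →
      stdOrient.areaForm (G.dir v p) (G.dir v y) = Real.sin (θ y) := by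
    intro y hy
    have hyv := hne_of_adj y hy
    have hnp : ‖p - v‖ ≠ 0 := norm_ne_zero_iff.2 hpv
    have hny : ‖y - v‖ ≠ 0 := norm_ne_zero_iff.2 hyv
    unfold GeodesicNet.dir
    rw [map_smul stdOrient.areaForm, LinearMap.smul_apply, map_smul]
    rw [smul_eq_mul, smul_eq_mul, areaForm_eq_sin]
    simp only [hθ]
    rw [ccw_sin]
    field_simp
  -- sums of cosines and sines over the neighbourhood vanish
  have hc0 : ∑ y ∈ G.nbhd v, Real.cos (θ y) = 0 := by
    have h1 : (inner ℝ (G.dir v p) (∑ y ∈ G.nbhd v, G.dir v y) : ℝ) = 0 := by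
      rw [hsum, inner_zero_right]
    rw [inner_sum] at h1
    rw [← h1]
    exact (Finset.sum_congr rfl fun y hy => (hdir_cos y (hadj_of_mem y hy)).symm)
  have hs0 : ∑ y ∈ G.nbhd v, Real.sin (θ y) = 0 := by
    have h1 : stdOrient.areaForm (G.dir v p) (∑ y ∈ G.nbhd v, G.dir v y) = 0 := by
      rw [hsum, map_zero]
    rw [map_sum] at h1
    rw [← h1]
    exact (Finset.sum_congr rfl fun y hy => (hdir_sin y (hadj_of_mem y hy)).symm)
  -- θ p = 2π
  have hθp : θ p = 2 * π := by simp only [hθ]; exact ccw_self hpv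
  -- γ ∈ (π, 2π], β ∈ (0, γ]
  have hturnq : turnAngle p v q = γ - π := by
    simp only [hγ, hθ]; exact turn_eval p v q hpv hqv
  have hγπ : π < γ := by
    rw [hturnq] at hpos; linarith
  have hγ2π : γ ≤ 2 * π := by simp only [hγ, hθ]; exact ccw_le _ _
  have hβγ : β ≤ γ := by simp only [hβ, hγ, hθ]; exact hfirst q hvq hpq
  have hβpos : 0 < β := by simp only [hβ, hθ]; exact ccw_pos _ _
  -- setup for the core lemma
  have hxmem : x ∈ G.nbhd v := hmemnbhd x hvx
  set s := (G.nbhd v).erase x with hss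
  have hcard : 2 ≤ s.card := by
    rw [hss, Finset.card_erase_of_mem hxmem]
    omega
  have hθs : ∀ y ∈ s, γ ≤ θ y ∧ θ y ≤ 2 * π := by
    intro y hy
    have hyn : y ∈ G.nbhd v := Finset.mem_of_mem_erase hy
    have hynx : y ≠ x := (Finset.mem_erase.1 hy).1
    constructor
    · by_cases hyp : y = p
      · rw [hyp, hθp]; linarith
      · simp only [hγ, hθ]; exact hsecond y (hadj_of_mem y hyn) hyp hynx
    · simp only [hθ]; exact ccw_le _ _
  -- sums over s
  have hcs : ∑ y ∈ s, Real.cos (θ y) = -Real.cos β := by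
    have h := Finset.sum_erase_add (G.nbhd v) (fun y => Real.cos (θ y)) hxmem
    rw [hc0, ← hβ] at h
    linarith
  have hss' : ∑ y ∈ s, Real.sin (θ y) = -Real.sin β := by
    have h := Finset.sum_erase_add (G.nbhd v) (fun y => Real.sin (θ y)) hxmem
    rw [hs0, ← hβ] at h
    linarith
  -- the recentered family
  set f : EuclideanSpace ℝ (Fin 2) → ℝ := fun y => θ y - (β + π) with hf
  clear_value f
  have hfc : ∑ y ∈ s, Real.cos (f y) = 1 := by
    have hterm : ∀ y ∈ s, Real.cos (f y)
        = -(Real.cos (θ y) * Real.cos β) - Real.sin (θ y) * Real.sin β := by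
      intro y hy
      simp only [hf]
      rw [show θ y - (β + π) = θ y - β - π by ring, Real.cos_sub (θ y - β) π,
        Real.cos_pi, Real.sin_pi, Real.cos_sub]
      ring
    rw [Finset.sum_congr rfl hterm, Finset.sum_sub_distrib, Finset.sum_neg_distrib,
      ← Finset.sum_mul, ← Finset.sum_mul, hcs, hss']
    nlinarith [Real.sin_sq_add_cos_sq β]
  have hfs : ∑ y ∈ s, Real.sin (f y) = 0 := by
    have hterm : ∀ y ∈ s, Real.sin (f y)
        = -(Real.sin (θ y) * Real.cos β) + Real.cos (θ y) * Real.sin β := by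
      intro y hy
      simp only [hf]
      rw [show θ y - (β + π) = θ y - β - π by ring, Real.sin_sub (θ y - β) π,
        Real.cos_pi, Real.sin_pi, Real.sin_sub]
      ring
    rw [Finset.sum_congr rfl hterm, Finset.sum_add_distrib, Finset.sum_neg_distrib,
      ← Finset.sum_mul, ← Finset.sum_mul, hcs, hss']
    ring
  have hfmem : ∀ y ∈ s, γ - (β + π) ≤ f y ∧ f y ≤ 2 * π - (β + π) := by
    intro y hy
    obtain ⟨h1, h2⟩ := hθs y hy
    exact ⟨by simp only [hf]; linarith, by simp only [hf]; linarith⟩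
  have hwidth : (2 * π - (β + π)) - (γ - (β + π)) < π := by linarith
  -- direct application: β ≤ 2π/3
  have hβub : β ≤ 2 * π / 3 := by
    obtain ⟨y, hy, hfy⟩ := core_exists s f (γ - (β + π)) (2 * π - (β + π)) hcard hfmem hwidth
      (by linarith) hfc hfs
    have := (hfmem y hy).2
    linarith
  -- mirrored application: γ - β ≤ 2π/3
  have hγβub : γ - β ≤ 2 * π / 3 := by
    obtain ⟨y, hy, hfy⟩ := core_exists s (fun y => -(f y)) (-(2 * π - (β + π))) (-(γ - (β + π)))
      hcard (fun y hy => ⟨show _ ≤ -(f y) by linarith [(hfmem y hy).2],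
        show -(f y) ≤ _ by linarith [(hfmem y hy).1]⟩)
      (by linarith) (by linarith [hβpos])
      (by rw [← hfc]; exact Finset.sum_congr rfl fun y _ => by rw [Real.cos_neg])
      (by calc ∑ y ∈ s, Real.sin (-(f y)) = ∑ y ∈ s, -Real.sin (f y) :=
              Finset.sum_congr rfl fun y _ => by rw [Real.sin_neg]
            _ = 0 := by rw [Finset.sum_neg_distrib, hfs, neg_zero])
    have hfy' : π / 3 ≤ -(f y) := hfy
    have := (hfmem y hy).1
    linarith
  -- resulting bounds
  have hβlb : π / 3 < β := by linarith
  have hγβlb : π / 3 < γ - β := by linarith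
  have hγub : γ ≤ 4 * π / 3 := by linarith
  -- evaluate the three turn angles
  have hturnx : turnAngle p v x = β - π := by
    simp only [hβ, hθ]; exact turn_eval p v x hpv hxv
  have hturnxq : turnAngle x v q = (γ - β) - π := by
    unfold turnAngle
    have h1 : stdOrient.oangle (v - x) (q - v) = stdOrient.oangle (x - v) (q - v) + (π : ℝ) := by
      rw [← neg_sub x v, stdOrient.oangle_neg_left hxv hqv]
    have h2 : stdOrient.oangle (x - v) (q - v)
        = ((γ - β : ℝ) : Real.Angle) := by
      have h3 : stdOrient.oangle (x - v) (p - v) + stdOrient.oangle (p - v) (q - v)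
          = stdOrient.oangle (x - v) (q - v) := stdOrient.oangle_add hxv hpv hqv
      have h4 : stdOrient.oangle (x - v) (p - v) = -((β : ℝ) : Real.Angle) := by
        rw [stdOrient.oangle_rev]
        simp only [hβ, hθ]
        rw [ccw_coe]
      have h5 : stdOrient.oangle (p - v) (q - v) = ((γ : ℝ) : Real.Angle) := by
        simp only [hγ, hθ]
        rw [ccw_coe]
      rw [← h3, h4, h5, Real.Angle.coe_sub]
      abel
    rw [h1, h2]
    exact toReal_add_pi (by linarith) (by linarith [Real.pi_pos])
  refine ⟨⟨hpos, by rw [hturnq]; linarith⟩,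
    ⟨by rw [hturnx]; linarith, by rw [hturnx]; linarith⟩,
    ⟨by rw [hturnxq]; linarith, by rw [hturnxq]; linarith⟩⟩
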